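/- Completeness in the finitary case: for all finitary commutative regular expressions e and f (containing no star), e ≡ f if and only if ⟦e⟧ = ⟦f⟧. -/

import Mathlib

namespace CKAnote

/-- Commutative regular expressions over an alphabet `α`. -/
inductive CRE (α : Type) where
  | zero : CRE α
  | one : CRE α
  | letter : α → CRE α
  | mul : CRE α → CRE α → CRE α
  | union : CRE α → CRE α → CRE α
  | star : CRE α → CRE α

variable {α : Type} [Fintype α] [DecidableEq α]

/-- Semantics of a commutative regular expression as a set of Parikh vectors. -/
def sem : CRE α → Set (α → ℕ)
  | .zero => ∅
  | .one => {0}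
  | .letter a => {Pi.single a 1}
  | .mul e f => {w | ∃ u ∈ sem e, ∃ v ∈ sem f, w = u + v}
  | .union e f => sem e ∪ sem f
  | .star e => ↑(AddSubmonoid.closure (sem e))

/-- Provable equality: the smallest congruence containing the axioms of
commutative Kleene algebra (where `e ≤ f` abbreviates `e ∪ f ≡ f`). -/
inductive CKA : CRE α → CRE α → Prop
  | refl (e : CRE α) : CKA e e
  | symm {e f : CRE α} : CKA e f → CKA f e
  | trans {e f g : CRE α} : CKA e f → CKA f g → CKA e g
  | mul_congr {e e' f f' : CRE α} : CKA e e' → CKA f f' → CKA (e.mul f) (e'.mul f')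
  | union_congr {e e' f f' : CRE α} : CKA e e' → CKA f f' → CKA (e.union f) (e'.union f')
  | star_congr {e e' : CRE α} : CKA e e' → CKA e.star e'.star
  | mul_assoc (e f g : CRE α) : CKA (e.mul (f.mul g)) ((e.mul f).mul g)
  | mul_comm (e f : CRE α) : CKA (e.mul f) (f.mul e)
  | one_mul (e : CRE α) : CKA (CRE.one.mul e) e
  | union_assoc (e f g : CRE α) : CKA (e.union (f.union g)) ((e.union f).union g)
  | union_comm (e f : CRE α) : CKA (e.union f) (f.union e)
  | union_idem (e : CRE α) : CKA (e.union e) e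
  | zero_union (e : CRE α) : CKA (CRE.zero.union e) e
  | zero_mul (e : CRE α) : CKA (CRE.zero.mul e) CRE.zero
  | left_distrib (e f g : CRE α) : CKA (e.mul (f.union g)) ((e.mul f).union (e.mul g))
  | star_unfold (e : CRE α) : CKA ((CRE.one.union (e.mul e.star)).union e.star) e.star
  | star_lfp {e f : CRE α} : CKA ((e.mul f).union f) f → CKA ((e.star.mul f).union f) f

/-- `e ≤ f`, i.e. `e ∪ f ≡ f`. -/
def leq (e f : CRE α) : Prop := CKA (e.union f) f

/-- `e^n`, the `n`-fold product of `e` with itself. -/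
def pow (e : CRE α) : ℕ → CRE α
  | 0 => CRE.one
  | n + 1 => e.mul (pow e n)

/-- `e^{<n}`, i.e. `(e ∪ 1)^(n-1)` for `n > 0` and `0` for `n = 0`. -/
def ltPow (e : CRE α) : ℕ → CRE α
  | 0 => CRE.zero
  | n + 1 => pow (e.union CRE.one) n

/-- Finite union of a list of expressions. -/
def unionList : List (CRE α) → CRE α
  | [] => CRE.zero
  | e :: l => e.union (unionList l)

/-- Finite product of a list of expressions. -/
def prodList : List (CRE α) → CRE α
  | [] => CRE.one
  | e :: l => e.mul (prodList l)

/-- `expr(u)`: the product over `a ∈ α` of `u a` copies of the letter `a`. -/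
noncomputable def exprVec (u : α → ℕ) : CRE α :=
  prodList ((Finset.univ : Finset α).toList.map (fun a => pow (CRE.letter a) (u a)))

/-- The union `⋃_{b ∈ B} expr(b)` for a finite set of Parikh vectors `B`. -/
noncomputable def unionVecs (B : Finset (α → ℕ)) : CRE α :=
  unionList (B.toList.map exprVec)

/-- The linear expression `expr(u) · (⋃_{b ∈ B} expr(b))*`. -/
noncomputable def linExpr (u : α → ℕ) (B : Finset (α → ℕ)) : CRE α :=
  (exprVec u).mul (unionVecs B).star

/-- A finite set of Parikh vectors is independent when every Parikh vector
admits at most one representation as an `ℕ`-linear combination of its elements. -/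
def Independent (B : Finset (α → ℕ)) : Prop :=
  ∀ c d : (α → ℕ) → ℕ, (∑ b ∈ B, c b • b) = (∑ b ∈ B, d b • b) → ∀ b ∈ B, c b = d b

/-- The semilinear expression associated to a list of linear data:
the finite union of the corresponding linear expressions. -/
noncomputable def semiLin (L : List ((α → ℕ) × Finset (α → ℕ))) : CRE α :=
  unionList (L.map (fun p => linExpr p.1 p.2))

/-- The dimension of a semilinear expression: the maximum of the dimensions
of its linear components. -/
def dimSL (L : List ((α → ℕ) × Finset (α → ℕ))) : ℕ :=
  (L.map (fun p => p.2.card)).foldr max 0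

/-- Finitary (star-free) expressions. -/
def NoStar : CRE α → Prop
  | .zero => True
  | .one => True
  | .letter _ => True
  | .mul e f => NoStar e ∧ NoStar f
  | .union e f => NoStar e ∧ NoStar f
  | .star _ => False

/-- Coordinatewise embedding of `ℕ^α` into `ℚ^α`. -/
def toQ (v : α → ℕ) : α → ℚ := fun a => (v a : ℚ)

set_option linter.unusedSectionVars false
open scoped Pointwise

/-! ### Basic order/equivalence toolkit for `CKA` -/

lemma CKA.mul_one (e : CRE α) : CKA (e.mul CRE.one) e :=
  (CKA.mul_comm _ _).trans (CKA.one_mul e)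

lemma CKA.mul_zero (e : CRE α) : CKA (e.mul CRE.zero) CRE.zero :=
  (CKA.mul_comm _ _).trans (CKA.zero_mul e)

lemma CKA.union_zero (e : CRE α) : CKA (e.union CRE.zero) e :=
  (CKA.union_comm _ _).trans (CKA.zero_union e)

lemma CKA.right_distrib (e f g : CRE α) :
    CKA ((e.union f).mul g) ((e.mul g).union (f.mul g)) :=
  (CKA.mul_comm _ _).trans <| (CKA.left_distrib g e f).trans <|
    CKA.union_congr (CKA.mul_comm _ _) (CKA.mul_comm _ _)

lemma leq_refl (e : CRE α) : leq e e := CKA.union_idem e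

lemma leq_trans {e f g : CRE α} (h1 : leq e f) (h2 : leq f g) : leq e g := by
  unfold leq at *
  have s1 : CKA (e.union g) (e.union (f.union g)) := CKA.union_congr (CKA.refl e) h2.symm
  have s2 : CKA (e.union (f.union g)) ((e.union f).union g) := CKA.union_assoc e f g
  have s3 : CKA ((e.union f).union g) (f.union g) := CKA.union_congr h1 (CKA.refl g)
  exact ((s1.trans s2).trans s3).trans h2

lemma leq_antisymm {e f : CRE α} (h1 : leq e f) (h2 : leq f e) : CKA e f :=
  h2.symm.trans ((CKA.union_comm f e).trans h1)

lemma le_union_left (e f : CRE α) : leq e (e.union f) :=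
  (CKA.union_assoc e e f).trans (CKA.union_congr (CKA.union_idem e) (CKA.refl f))

lemma le_union_right (e f : CRE α) : leq f (e.union f) :=
  ((CKA.union_comm _ _).trans ((CKA.union_assoc e f f).symm)).trans
    (CKA.union_congr (CKA.refl e) (CKA.union_idem f))

lemma union_le {e f g : CRE α} (h1 : leq e g) (h2 : leq f g) : leq (e.union f) g :=
  (CKA.union_assoc e f g).symm.trans <|
    (CKA.union_congr (CKA.refl e) h2).trans h1

lemma leq_congr {e e' f f' : CRE α} (he : CKA e e') (hf : CKA f f') (h : leq e f) :
    leq e' f' := (CKA.union_congr he.symm hf.symm).trans (h.trans hf)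

/-! ### `unionList` lemmas -/

lemma mem_le_unionList {x : CRE α} {l : List (CRE α)} (h : x ∈ l) :
    leq x (unionList l) := by
  induction l with
  | nil => simp at h
  | cons y l ih =>
    rcases List.mem_cons.mp h with rfl | h
    · exact le_union_left _ _
    · exact leq_trans (ih h) (le_union_right _ _)

lemma unionList_le {g : CRE α} {l : List (CRE α)} (h : ∀ x ∈ l, leq x g) :
    leq (unionList l) g := by
  induction l with
  | nil => exact CKA.zero_union g
  | cons y l ih =>
    exact union_le (h y (by simp)) (ih fun x hx => h x (by simp [hx]))

lemma unionList_same_mem {l1 l2 : List (CRE α)}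
    (h1 : ∀ x ∈ l1, x ∈ l2) (h2 : ∀ x ∈ l2, x ∈ l1) :
    CKA (unionList l1) (unionList l2) :=
  leq_antisymm (unionList_le fun x hx => mem_le_unionList (h1 x hx))
    (unionList_le fun x hx => mem_le_unionList (h2 x hx))

lemma unionList_append (l1 l2 : List (CRE α)) :
    CKA (unionList (l1 ++ l2)) ((unionList l1).union (unionList l2)) := by
  induction l1 with
  | nil => exact (CKA.zero_union (unionList l2)).symm
  | cons x l ih =>
    exact (CKA.union_congr (CKA.refl x) ih).trans (CKA.union_assoc _ _ _)

/-! ### `prodList` / `pow` lemmas -/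

lemma mul_mul_mul_comm' (a b c d : CRE α) :
    CKA ((a.mul b).mul (c.mul d)) ((a.mul c).mul (b.mul d)) := by
  have h1 : CKA ((a.mul b).mul (c.mul d)) (a.mul (b.mul (c.mul d))) :=
    (CKA.mul_assoc _ _ _).symm
  have h2 : CKA (b.mul (c.mul d)) (c.mul (b.mul d)) :=
    (CKA.mul_assoc b c d).trans <|
      (CKA.mul_congr (CKA.mul_comm b c) (CKA.refl d)).trans (CKA.mul_assoc c b d).symm
  exact (h1.trans (CKA.mul_congr (CKA.refl a) h2)).trans (CKA.mul_assoc _ _ _)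

lemma prodList_ones {l : List (CRE α)} (h : ∀ x ∈ l, CKA x CRE.one) :
    CKA (prodList l) CRE.one := by
  induction l with
  | nil => exact CKA.refl _
  | cons x l ih =>
    exact (CKA.mul_congr (h x (by simp)) (ih fun y hy => h y (by simp [hy]))).trans
      (CKA.one_mul _)

lemma pow_add' (e : CRE α) (m n : ℕ) :
    CKA (pow e (m + n)) ((pow e m).mul (pow e n)) := by
  induction m with
  | zero => simpa [pow] using (CKA.one_mul (pow e n)).symm
  | succ m ih =>
    have : m + 1 + n = (m + n) + 1 := by omega
    rw [this]
    exact ((CKA.mul_congr (CKA.refl e) ih).trans (CKA.mul_assoc _ _ _)).trans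
      (CKA.refl _)

/-! ### `exprVec` lemmas -/

lemma exprVec_zero : CKA (exprVec (0 : α → ℕ)) CRE.one := by
  unfold exprVec
  apply prodList_ones
  intro x hx
  simp only [List.mem_map] at hx
  obtain ⟨a, _, rfl⟩ := hx
  exact CKA.refl _

lemma prod_pow_letter_add (u v : α → ℕ) (l : List α) :
    CKA (prodList (l.map fun a => pow (CRE.letter a) ((u + v) a)))
      ((prodList (l.map fun a => pow (CRE.letter a) (u a))).mul
        (prodList (l.map fun a => pow (CRE.letter a) (v a)))) := by
  induction l with
  | nil => exact (CKA.one_mul _).symm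
  | cons a l ih =>
    simp only [List.map_cons, prodList]
    have h1 : CKA (pow (CRE.letter a) ((u + v) a))
        ((pow (CRE.letter a) (u a)).mul (pow (CRE.letter a) (v a))) := by
      have : (u + v) a = u a + v a := rfl
      rw [this]; exact pow_add' _ _ _
    exact (CKA.mul_congr h1 ih).trans (mul_mul_mul_comm' _ _ _ _)

lemma exprVec_add (u v : α → ℕ) :
    CKA (exprVec (u + v)) ((exprVec u).mul (exprVec v)) :=
  prod_pow_letter_add u v _

lemma prod_pow_single_notmem (a : α) (l : List α) (ha : a ∉ l) :
    CKA (prodList (l.map fun b => pow (CRE.letter b) ((Pi.single a 1 : α → ℕ) b))) CRE.one := by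
  apply prodList_ones
  intro x hx
  simp only [List.mem_map] at hx
  obtain ⟨b, hb, rfl⟩ := hx
  have hba : b ≠ a := fun h => ha (h ▸ hb)
  rw [Pi.single_eq_of_ne hba]
  exact CKA.refl _

lemma prod_pow_single_mem (a : α) (l : List α) (hnd : l.Nodup) (ha : a ∈ l) :
    CKA (prodList (l.map fun b => pow (CRE.letter b) ((Pi.single a 1 : α → ℕ) b)))
      (CRE.letter a) := by
  induction l with
  | nil => simp at ha
  | cons b l ih =>
    simp only [List.map_cons, prodList]
    rcases List.mem_cons.mp ha with rfl | ha'
    · have hnotmem : a ∉ l := (List.nodup_cons.mp hnd).1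
      have h1 : CKA (pow (CRE.letter a) ((Pi.single a 1 : α → ℕ) a)) (CRE.letter a) := by
        rw [Pi.single_eq_same]
        exact CKA.mul_one _
      exact (CKA.mul_congr h1 (prod_pow_single_notmem a l hnotmem)).trans
        (CKA.mul_one _)
    · have hba : b ≠ a := by
        rintro rfl; exact (List.nodup_cons.mp hnd).1 ha'
      have h1 : CKA (pow (CRE.letter b) ((Pi.single a 1 : α → ℕ) b)) CRE.one := by
        rw [Pi.single_eq_of_ne hba]; exact CKA.refl _
      exact (CKA.mul_congr h1 (ih (List.nodup_cons.mp hnd).2 ha')).trans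
        (CKA.one_mul _)

lemma exprVec_single (a : α) : CKA (exprVec (Pi.single a 1)) (CRE.letter a) :=
  prod_pow_single_mem a _ (Finset.nodup_toList _) (by simp)

/-! ### semantics computations -/

lemma sem_mul (e f : CRE α) : sem (e.mul f) = sem e + sem f := by
  ext w; simp [sem, Set.mem_add, eq_comm]

lemma sem_pow_letter (a : α) (n : ℕ) :
    sem (pow (CRE.letter a) n) = {Pi.single a n} := by
  induction n with
  | zero => simp [pow, sem]
  | succ n ih =>
    rw [show pow (CRE.letter a) (n+1) = (CRE.letter a).mul (pow (CRE.letter a) n) from rfl,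
      sem_mul, ih]
    rw [show sem (CRE.letter a) = {Pi.single a 1} from rfl, Set.singleton_add_singleton,
      ← Pi.single_add, Nat.add_comm]

lemma sem_prod_pow (u : α → ℕ) (l : List α) :
    sem (prodList (l.map fun a => pow (CRE.letter a) (u a)))
      = {(l.map fun a => Pi.single a (u a)).sum} := by
  induction l with
  | nil => simp [prodList, sem]
  | cons a l ih =>
    simp only [List.map_cons, prodList, sem_mul, ih, sem_pow_letter, List.sum_cons]
    simp

lemma sem_exprVec (u : α → ℕ) : sem (exprVec u) = {u} := by
  rw [exprVec, sem_prod_pow]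
  congr 1
  have : ((Finset.univ : Finset α).toList.map fun a => Pi.single a (u a)).sum
      = ∑ a : α, Pi.single a (u a) := by
    rw [Finset.sum, ← Multiset.sum_coe, ← Multiset.map_coe, Finset.coe_toList]
  rw [this, Finset.univ_sum_single]

lemma sem_unionList (l : List (CRE α)) :
    sem (unionList l) = ⋃ x ∈ l, sem x := by
  induction l with
  | nil => simp [unionList, sem]
  | cons x l ih => simp [unionList, sem, ih]

lemma sem_unionList_exprVec (l : List (α → ℕ)) :
    sem (unionList (l.map exprVec)) = {v | v ∈ l} := by
  rw [sem_unionList]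
  ext v
  simp [sem_exprVec, eq_comm]

/-! ### Multiplication of unions of `exprVec`s -/

lemma mul_exprVec_unionList (u : α → ℕ) (l : List (α → ℕ)) :
    CKA ((exprVec u).mul (unionList (l.map exprVec)))
      (unionList ((l.map (u + ·)).map exprVec)) := by
  induction l with
  | nil => exact CKA.mul_zero _
  | cons v l ih =>
    simp only [List.map_cons, unionList]
    exact (CKA.left_distrib _ _ _).trans
      (CKA.union_congr (exprVec_add u v).symm ih)

lemma mul_unionList_unionList (l1 l2 : List (α → ℕ)) :
    CKA ((unionList (l1.map exprVec)).mul (unionList (l2.map exprVec)))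
      (unionList ((l1.flatMap fun u => l2.map (u + ·)).map exprVec)) := by
  induction l1 with
  | nil => exact CKA.zero_mul _
  | cons u l1 ih =>
    simp only [List.map_cons, unionList, List.flatMap_cons, List.map_append]
    exact ((CKA.right_distrib _ _ _).trans
      (CKA.union_congr (mul_exprVec_unionList u l2) ih)).trans
      (unionList_append _ _).symm

/-! ### Normal form for star-free expressions -/

lemma union_zero_right (e : CRE α) : CKA e (e.union CRE.zero) :=
  (CKA.union_zero e).symm

lemma normal_form (e : CRE α) (he : NoStar e) :
    ∃ l : List (α → ℕ), CKA e (unionList (l.map exprVec)) ∧ sem e = {v | v ∈ l} := by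
  induction e with
  | zero =>
    exact ⟨[], CKA.refl _, by ext v; simp [sem]⟩
  | one =>
    refine ⟨[0], ?_, by ext v; simp [sem, eq_comm]⟩
    simp only [List.map_cons, List.map_nil, unionList]
    exact exprVec_zero.symm.trans (union_zero_right _)
  | letter a =>
    refine ⟨[Pi.single a 1], ?_, by ext v; simp [sem, eq_comm]⟩
    simp only [List.map_cons, List.map_nil, unionList]
    exact (exprVec_single a).symm.trans (union_zero_right _)
  | mul e f ihe ihf =>
    obtain ⟨l1, h1, s1⟩ := ihe he.1
    obtain ⟨l2, h2, s2⟩ := ihf he.2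
    refine ⟨l1.flatMap fun u => l2.map (u + ·), ?_, ?_⟩
    · exact (CKA.mul_congr h1 h2).trans (mul_unionList_unionList l1 l2)
    · rw [sem_mul, s1, s2]
      ext w
      simp [Set.mem_add, eq_comm]
  | union e f ihe ihf =>
    obtain ⟨l1, h1, s1⟩ := ihe he.1
    obtain ⟨l2, h2, s2⟩ := ihf he.2
    refine ⟨l1 ++ l2, ?_, ?_⟩
    · rw [List.map_append]
      exact (CKA.union_congr h1 h2).trans (unionList_append _ _).symm
    · rw [show sem (e.union f) = sem e ∪ sem f from rfl, s1, s2]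
      ext w; simp
  | star e ih => exact absurd he id

/-! ### Soundness -/

lemma soundness {e f : CRE α} (h : CKA e f) : sem e = sem f := by
  induction h with
  | refl e => rfl
  | symm _ ih => exact ih.symm
  | trans _ _ ih1 ih2 => exact ih1.trans ih2
  | mul_congr _ _ ih1 ih2 => rw [sem_mul, sem_mul, ih1, ih2]
  | union_congr _ _ ih1 ih2 =>
    show sem _ ∪ sem _ = sem _ ∪ sem _
    rw [ih1, ih2]
  | star_congr _ ih =>
    show ((AddSubmonoid.closure (sem _) : AddSubmonoid (α → ℕ)) : Set (α → ℕ)) = _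
    rw [ih]; rfl
  | mul_assoc e f g =>
    simp only [sem_mul]; exact (add_assoc _ _ _).symm
  | mul_comm e f => simp only [sem_mul]; exact add_comm _ _
  | one_mul e =>
    rw [sem_mul, show sem (CRE.one : CRE α) = {0} from rfl]
    simp
  | union_assoc e f g =>
    show sem e ∪ (sem f ∪ sem g) = (sem e ∪ sem f) ∪ sem g
    exact (Set.union_assoc _ _ _).symm
  | union_comm e f => exact Set.union_comm _ _
  | union_idem e => exact Set.union_self _
  | zero_union e => exact Set.empty_union _
  | zero_mul e =>
    rw [sem_mul, show sem (CRE.zero : CRE α) = ∅ from rfl]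
    simp
  | left_distrib e f g =>
    show sem (e.mul (f.union g)) = sem (e.mul f) ∪ sem (e.mul g)
    simp only [sem_mul, show sem (f.union g) = sem f ∪ sem g from rfl]
    exact Set.add_union
  | star_unfold e =>
    show ({0} ∪ sem (e.mul e.star)) ∪ sem e.star = sem e.star
    rw [sem_mul]
    apply Set.union_eq_self_of_subset_left
    apply Set.union_subset
    · intro w hw
      rw [Set.mem_singleton_iff] at hw
      subst hw
      exact AddSubmonoid.zero_mem _
    · rintro w ⟨u, hu, v, hv, rfl⟩
      exact AddSubmonoid.add_mem _ (AddSubmonoid.subset_closure hu) hv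
  | @star_lfp e f _ ih =>
    show sem (e.star.mul f) ∪ sem f = sem f
    rw [sem_mul]
    apply Set.union_eq_self_of_subset_left
    have hstep : ∀ u ∈ sem e, ∀ v ∈ sem f, u + v ∈ sem f := by
      intro u hu v hv
      have h2 : sem (e.mul f) ∪ sem f = sem f := ih
      rw [← h2]
      exact Or.inl ⟨u, hu, v, hv, rfl⟩
    have key : ∀ u ∈ AddSubmonoid.closure (sem e), ∀ v ∈ sem f, u + v ∈ sem f := by
      intro u hu
      induction hu using AddSubmonoid.closure_induction with
      | mem x hx => exact hstep x hx
      | zero => intro v hv; simpa using hv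
      | add x y hx hy ihx ihy =>
        intro v hv
        rw [add_assoc]
        exact ihx _ (ihy v hv)
    rintro w hw
    rw [Set.mem_add] at hw
    obtain ⟨u, hu, v, hv, rfl⟩ := hw
    exact key u hu v hv

/-! ### Completeness -/
theorem completeness_fin' (e f : CRE α) (he : NoStar e) (hf : NoStar f) :
    CKA e f ↔ sem e = sem f := by
  constructor
  · exact soundness
  · intro hsem
    obtain ⟨l1, h1, s1⟩ := normal_form e he
    obtain ⟨l2, h2, s2⟩ := normal_form f hf
    have hmem : ∀ v : α → ℕ, v ∈ l1 ↔ v ∈ l2 := by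
      intro v
      have : ({v | v ∈ l1} : Set (α → ℕ)) = {v | v ∈ l2} := by rw [← s1, ← s2, hsem]
      exact Set.ext_iff.mp this v
    have hU : CKA (unionList (l1.map exprVec)) (unionList (l2.map exprVec)) := by
      apply unionList_same_mem
      · intro x hx
        simp only [List.mem_map] at hx ⊢
        obtain ⟨u, hu, rfl⟩ := hx
        exact ⟨u, (hmem u).mp hu, rfl⟩
      · intro x hx
        simp only [List.mem_map] at hx ⊢
        obtain ⟨u, hu, rfl⟩ := hx
        exact ⟨u, (hmem u).mpr hu, rfl⟩
    exact (h1.trans hU).trans h2.symm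

/-- Completeness in the finitary case: for star-free `e`, `f`,
`e ≡ f` iff `⟦e⟧ = ⟦f⟧`. -/
theorem completeness_fin (e f : CRE α) (he : NoStar e) (hf : NoStar f) :
    CKA e f ↔ sem e = sem f := by
  exact completeness_fin' e f he hf

end CKAnote
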